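/- Let A be an elliptic quadric (cubic 3-dimensional regular Z-algebra) over an algebraically closed field k of characteristic ≠ 2, with associated elliptic helix (C, (L_i)_{i∈Z}). Suppose there exists a group homomorphism η : Pic^0(C) → Aut(C) with η(A)^*(B) ≅ B ⊗ A^{⊗ -b} for all A ∈ Pic^0(C) and B ∈ Pic(C) of total degree b. Then there exists σ ∈ Aut(C) with σ^*(B) ≅ B ⊗ L_2 ⊗ L_0^{-1} for all B ∈ Pic^2(C); consequently (C, L_0, L_1, L_2) ≅ (C, L_2, L_3, L_4) and A ≅ A(2) as Z-algebras. -/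

import Mathlib

/-- 2-periodicity of elliptic quadrics.  Let `A` be an elliptic quadric
(cubic 3-dimensional regular ℤ-algebra) over an algebraically closed field `k` of
characteristic ≠ 2, with associated cubic elliptic helix `(C, (L_i)_{i ∈ ℤ})`: the `L i`
are classes in the Picard group `Pic` of the genus-one curve `C`, each of total degree 2,
satisfying `L_i ⊗ L_{i+1}⁻¹ ⊗ L_{i+2}⁻¹ ⊗ L_{i+3} ≅ O_C`, and (by admissibility of the
associated quadruple) `L_2 ⊗ L_0⁻¹` has degree zero on every component.  `Aut` is the
automorphism group of `C` acting on `Pic` by pullback; `Pic⁰(C)` is 2-divisible since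
`char k ≠ 2` (`hdiv`); `η : Pic⁰(C) → Aut(C)` satisfies `η(A)^*(B) ≅ B ⊗ A^{⊗ -deg B}`.
Claim: there is `σ ∈ Aut(C)` with `σ^*(B) ≅ B ⊗ L_2 ⊗ L_0⁻¹` for every `B ∈ Pic²(C)`;
consequently `σ^* L_i ≅ L_{i+2}` for all `i`, i.e. the quadruple `(C, L0, L1, L2)` is
isomorphic to `(C, L2, L3, L4)`, and hence `A ≅ A(2)` (quadrics being determined by
their quadruples). -/
theorem elliptic_quadric_is_two_periodic
    (k : Type) [Field k] [IsAlgClosed k] (hchar : ringChar k ≠ 2)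
    (Pic : Type) [CommGroup Pic] (Component : Type)
    (deg : Pic → ℤ) (hdeg : ∀ L M : Pic, deg (L * M) = deg L + deg M)
    (degC : Component → Pic → ℤ)
    (hdegC : ∀ (E : Component) (L M : Pic), degC E (L * M) = degC E L + degC E M)
    (Aut : Type) [Group Aut]
    (pull : Aut → Pic → Pic)
    (hpullmul : ∀ (σ : Aut) (L M : Pic), pull σ (L * M) = pull σ L * pull σ M)
    -- Pic⁰(C) is 2-divisible (char k ≠ 2)
    (hdiv : ∀ D : Pic, (∀ E : Component, degC E D = 0) →
      ∃ A : Pic, (∀ E : Component, degC E A = 0) ∧ A ^ (2 : ℕ) = D)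
    (η : Pic → Aut)
    (hη : ∀ A : Pic, (∀ E : Component, degC E A = 0) →
      ∀ B : Pic, pull (η A) B = B * A ^ (-(deg B)))
    -- the cubic elliptic helix of the quadric A
    (L : ℤ → Pic)
    (hhelix : ∀ i : ℤ, L i * (L (i + 1))⁻¹ * (L (i + 2))⁻¹ * L (i + 3) = 1)
    (hdegL : ∀ i : ℤ, deg (L i) = 2)
    (hPic0 : ∀ E : Component, degC E (L 2 * (L 0)⁻¹) = 0) :
    ∃ σ : Aut,
      (∀ B : Pic, deg B = 2 → pull σ B = B * (L 2) * (L 0)⁻¹) ∧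
      (∀ i : ℤ, pull σ (L i) = L (i + 2)) ∧
      pull σ (L 0) = L 2 ∧ pull σ (L 1) = L 3 ∧ pull σ (L 2) = L 4 := by
  -- helix relation gives L (i+2) / L i = L (i+1+2) / L (i+1)
  have step : ∀ i : ℤ, L (i + 1 + 2) * (L (i + 1))⁻¹ = L (i + 2) * (L i)⁻¹ := by
    intro i
    have h3 : i + 1 + 2 = i + 3 := by ring
    rw [h3]
    have e : (L (i + 3) * (L (i + 1))⁻¹) * (L (i + 2) * (L i)⁻¹)⁻¹
        = L i * (L (i + 1))⁻¹ * (L (i + 2))⁻¹ * L (i + 3) := by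
      simp [mul_inv_rev, inv_inv, mul_comm, mul_left_comm, mul_assoc]
    rw [hhelix i] at e
    exact mul_inv_eq_one.mp e
  have key : ∀ i : ℤ, L (i + 2) * (L i)⁻¹ = L 2 * (L 0)⁻¹ := by
    intro i
    induction i using Int.induction_on with
    | zero => norm_num
    | succ n ih => rw [step n, ih]
    | pred n ih =>
        have hs := step (-(n : ℤ) - 1)
        rw [show (-(n:ℤ) - 1 + 1) = -(n:ℤ) by ring] at hs
        rw [← hs]
        exact ih
  have hdegC1 : ∀ E : Component, degC E 1 = 0 := by
    intro E
    have := hdegC E 1 1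
    simpa using this
  have hinv0 : ∀ E : Component, degC E (L 2 * (L 0)⁻¹)⁻¹ = 0 := by
    intro E
    have h := hdegC E (L 2 * (L 0)⁻¹) (L 2 * (L 0)⁻¹)⁻¹
    rw [mul_inv_cancel, hdegC1, hPic0 E] at h
    omega
  obtain ⟨A, hA0, hA2⟩ := hdiv (L 2 * (L 0)⁻¹)⁻¹ hinv0
  have hApow : A ^ (-(2:ℤ)) = L 2 * (L 0)⁻¹ := by
    rw [zpow_neg, zpow_ofNat, hA2, inv_inv]
  have hBpull : ∀ B : Pic, deg B = 2 → pull (η A) B = B * (L 2) * (L 0)⁻¹ := by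
    intro B hB
    rw [hη A hA0 B, hB, hApow, mul_assoc]
  have hLpull : ∀ i : ℤ, pull (η A) (L i) = L (i + 2) := by
    intro i
    rw [hη A hA0 (L i), hdegL i, hApow, ← key i,
      mul_comm (L (i + 2)) (L i)⁻¹, mul_inv_cancel_left]
  exact ⟨η A, hBpull, hLpull, by simpa using hLpull 0, by simpa using hLpull 1,
    by simpa using hLpull 2⟩
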